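/- Let G be a graph on at least 2 vertices that is not complete, and let G' be obtained from G by adding two new nonadjacent vertices u and v, each adjacent to all vertices of G. Then every m-convex set of G' that is a proper subset of V(G') is a clique of G'. -/

import Mathlib

/-- A walk is an induced path if it is a path and no two non-consecutive
vertices on it are adjacent (i.e., it has no chord). -/
def IsInducedPath {V : Type*} (G : SimpleGraph V) {u v : V} (p : G.Walk u v) : Prop :=
  p.IsPath ∧ ∀ (i j : ℕ) (hi : i < p.support.length) (hj : j < p.support.length),
    i + 1 < j → ¬ G.Adj p.support[i] p.support[j]

/-- `M` is monophonically convex if every induced path with both endpoints in `M`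
lies entirely in `M`. -/
def mConvex {V : Type*} (G : SimpleGraph V) (M : Set V) : Prop :=
  ∀ ⦃u v : V⦄ (p : G.Walk u v), IsInducedPath G p → u ∈ M → v ∈ M →
    ∀ x ∈ p.support, x ∈ M

/-- `G` extended by two new nonadjacent vertices (`Sum.inr false` and
`Sum.inr true`), each adjacent to all vertices of `G`. -/
def extendTwo {V : Type*} (G : SimpleGraph V) : SimpleGraph (V ⊕ Bool) where
  Adj a b :=
    match a, b with
    | .inl x, .inl y => G.Adj x y
    | .inl _, .inr _ => True
    | .inr _, .inl _ => True
    | .inr _, .inr _ => False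
  symm := by
    constructor
    intro a b h
    cases a <;> cases b <;> simp_all [SimpleGraph.adj_comm]
  loopless := by
    constructor
    intro a
    cases a <;> simp

lemma mem_of_path2 {V : Type*} (G : SimpleGraph V) {M : Set V} (hM : mConvex G M)
    {x y z : V} (hxy : G.Adj x y) (hyz : G.Adj y z) (hxz : x ≠ z) (hnadj : ¬ G.Adj x z)
    (hx : x ∈ M) (hz : z ∈ M) : y ∈ M := by
  have hp : IsInducedPath G (SimpleGraph.Walk.cons hxy (SimpleGraph.Walk.cons hyz SimpleGraph.Walk.nil)) := by
    constructor
    · simp [SimpleGraph.Walk.isPath_def, hxz, hxy.ne, hyz.ne]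
    · intro i j hi hj hij
      simp only [SimpleGraph.Walk.support_cons, SimpleGraph.Walk.support_nil,
        List.length_cons, List.length_nil] at hi hj
      have hi0 : i = 0 := by omega
      have hj2 : j = 2 := by omega
      subst hi0; subst hj2
      simpa using hnadj
  have := hM _ hp hx hz y (by simp)
  exact this

theorem stmt_19 {V : Type*} [Fintype V] (G : SimpleGraph V)
    (hcard : 2 ≤ Fintype.card V)
    (hnc : ∃ a b : V, a ≠ b ∧ ¬ G.Adj a b) :
    ∀ M : Set (V ⊕ Bool), mConvex (extendTwo G) M → M ≠ Set.univ →
      (extendTwo G).IsClique M := by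
  intro M hM hne
  rw [SimpleGraph.isClique_iff]
  intro a ha b hb hab
  by_contra hadj
  have key : ((Sum.inr false : V ⊕ Bool) ∈ M) ∧ ((Sum.inr true : V ⊕ Bool) ∈ M) := by
    match a, b with
    | .inl x, .inl y =>
      constructor
      · exact mem_of_path2 _ hM (x := Sum.inl x) (y := Sum.inr false) (z := Sum.inl y)
          trivial trivial hab hadj ha hb
      · exact mem_of_path2 _ hM (x := Sum.inl x) (y := Sum.inr true) (z := Sum.inl y)
          trivial trivial hab hadj ha hb
    | .inl x, .inr c => exact absurd trivial hadj
    | .inr c, .inl y => exact absurd trivial hadj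
    | .inr c, .inr d =>
      have : c ≠ d := fun h => hab (by rw [h])
      cases c <;> cases d <;> simp_all
  apply hne
  ext w
  simp only [Set.mem_univ, iff_true]
  match w with
  | .inl w =>
    exact mem_of_path2 _ hM (x := Sum.inr false) (y := Sum.inl w) (z := Sum.inr true)
      trivial trivial (by simp) (by intro h; exact h) key.1 key.2
  | .inr b => cases b
              · exact key.1
              · exact key.2
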